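/- Let n ≥ 3, let c be a nonzero real number, and let Δ be an n×n complex upper-triangular matrix which is diagonal except possibly for its (2,3) entry, and which satisfies Δ₂₂ = Δ₃₃ and Re(Δ₂₂) = 0. Let A be an n×n complex matrix with A₂₂ ≠ 0. If 2·Δᴴ·A·Δ + (Δᴴ)²·A + A·Δ² + c·(Δᴴ·A + A·Δ) = 0 (where Δᴴ denotes the conjugate transpose of Δ), then Δ₂₃ = 0. (Indeed, the (2,3) entry of the left-hand side equals c·A₂₂·Δ₂₃.) -/

import Mathlib

open Matrix

lemma sum_two_aux {n : ℕ} (i1 i2 : Fin n) (h : i1 ≠ i2) (a b : ℂ) :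
    ∑ l : Fin n, (if l = i1 then a else if l = i2 then b else 0) = a + b := by
  have hs : ∀ l : Fin n, (if l = i1 then a else if l = i2 then b else 0)
      = (if l = i1 then a else 0) + (if l = i2 then b else 0) := by
    intro l
    by_cases h1 : l = i1 <;> by_cases h2 : l = i2 <;> simp_all
  simp [hs, Finset.sum_add_distrib]

open Matrix in
theorem pluriclosed_nondiagonalizable (n : ℕ) (hn : 3 ≤ n) (c : ℝ) (hc : c ≠ 0)
    (Δ A : Matrix (Fin n) (Fin n) ℂ)
    (htri : ∀ i j : Fin n, j < i → Δ i j = 0)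
    (hdiag : ∀ i j : Fin n, i ≠ j →
      ¬(i = (⟨1, by omega⟩ : Fin n) ∧ j = (⟨2, by omega⟩ : Fin n)) → Δ i j = 0)
    (hΔ23 : Δ ⟨1, by omega⟩ ⟨1, by omega⟩ = Δ ⟨2, by omega⟩ ⟨2, by omega⟩)
    (hre : (Δ (⟨1, by omega⟩ : Fin n) (⟨1, by omega⟩ : Fin n)).re = 0)
    (hA : A (⟨1, by omega⟩ : Fin n) (⟨1, by omega⟩ : Fin n) ≠ 0)
    (heq : (2 : ℂ) • (Δᴴ * A * Δ) + Δᴴ ^ 2 * A + A * Δ ^ 2 +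
      (c : ℂ) • (Δᴴ * A + A * Δ) = 0) :
    Δ (⟨1, by omega⟩ : Fin n) (⟨2, by omega⟩ : Fin n) = 0 ∧
    ((2 : ℂ) • (Δᴴ * A * Δ) + Δᴴ ^ 2 * A + A * Δ ^ 2 +
        (c : ℂ) • (Δᴴ * A + A * Δ)) (⟨1, by omega⟩ : Fin n) (⟨2, by omega⟩ : Fin n) =
      (c : ℂ) * A ⟨1, by omega⟩ ⟨1, by omega⟩ * Δ ⟨1, by omega⟩ ⟨2, by omega⟩ := by
  set i1 : Fin n := ⟨1, by omega⟩
  set i2 : Fin n := ⟨2, by omega⟩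
  have hne : i1 ≠ i2 := by
    intro h; exact absurd (congrArg Fin.val h) (by norm_num)
  set d : ℂ := Δ i1 i1 with hd
  -- conj d = -d
  have hconj : (starRingEnd ℂ) d = -d := by
    apply Complex.ext <;> simp [hre]
  -- column 1 of Δ
  have hcol1 : ∀ k : Fin n, Δ k i1 = if k = i1 then d else 0 := by
    intro k
    by_cases hk : k = i1
    · simp [hk, hd]
    · simp only [hk, if_neg, ite_false]
      exact hdiag k i1 hk (fun h => hne h.2)
  -- column 2 of Δ
  have hcol2 : ∀ l : Fin n, Δ l i2 = if l = i1 then Δ i1 i2 else if l = i2 then d else 0 := by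
    intro l
    by_cases h1 : l = i1
    · simp [h1]
    · by_cases h2 : l = i2
      · simp [h1, h2, ← hΔ23, hd, Ne.symm hne]
      · simp only [h1, h2, ite_false]
        exact hdiag l i2 h2 (fun h => h1 h.1)
  -- (Δᴴ * A) i1 l = conj d * A i1 l
  have hB : ∀ l : Fin n, (Δᴴ * A) i1 l = -d * A i1 l := by
    intro l
    rw [Matrix.mul_apply]
    have : ∀ k : Fin n, Δᴴ i1 k * A k l = if k = i1 then -d * A i1 l else 0 := by
      intro k
      rw [Matrix.conjTranspose_apply, hcol1 k]
      by_cases hk : k = i1 <;> simp [hk, hconj]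
    rw [Finset.sum_congr rfl (fun k _ => this k), Finset.sum_ite_eq' Finset.univ i1]
    simp
  -- (A * Δ) i1 l for l = i1 and i2
  have hC1 : (A * Δ) i1 i1 = A i1 i1 * d := by
    rw [Matrix.mul_apply]
    have : ∀ k : Fin n, A i1 k * Δ k i1 = if k = i1 then A i1 i1 * d else 0 := by
      intro k; rw [hcol1 k]; by_cases hk : k = i1 <;> simp [hk]
    rw [Finset.sum_congr rfl (fun k _ => this k), Finset.sum_ite_eq' Finset.univ i1]
    simp
  have hC2 : (A * Δ) i1 i2 = A i1 i1 * Δ i1 i2 + A i1 i2 * d := by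
    rw [Matrix.mul_apply]
    have : ∀ k : Fin n, A i1 k * Δ k i2 =
        if k = i1 then A i1 i1 * Δ i1 i2 else if k = i2 then A i1 i2 * d else 0 := by
      intro k; rw [hcol2 k]
      by_cases h1 : k = i1 <;> by_cases h2 : k = i2 <;> simp [h1, h2, Ne.symm hne]
    rw [Finset.sum_congr rfl (fun k _ => this k), sum_two_aux i1 i2 hne]
  -- e1 : (Δᴴ * A * Δ) i1 i2
  have e1 : (Δᴴ * A * Δ) i1 i2 = -d * A i1 i1 * Δ i1 i2 + (-d * A i1 i2) * d := by
    rw [Matrix.mul_apply]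
    have : ∀ l : Fin n, (Δᴴ * A) i1 l * Δ l i2 =
        if l = i1 then -d * A i1 i1 * Δ i1 i2 else if l = i2 then (-d * A i1 i2) * d else 0 := by
      intro l; rw [hB l, hcol2 l]
      by_cases h1 : l = i1 <;> by_cases h2 : l = i2 <;> simp [h1, h2, Ne.symm hne, mul_assoc]
    rw [Finset.sum_congr rfl (fun l _ => this l), sum_two_aux i1 i2 hne]
  -- e2 : (Δᴴ ^ 2 * A) i1 i2
  have e2 : (Δᴴ ^ 2 * A) i1 i2 = -d * (-d * A i1 i2) := by
    have : Δᴴ ^ 2 * A = Δᴴ * (Δᴴ * A) := by rw [pow_two, mul_assoc]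
    rw [this, Matrix.mul_apply]
    have h2 : ∀ k : Fin n, Δᴴ i1 k * (Δᴴ * A) k i2 =
        if k = i1 then -d * (Δᴴ * A) i1 i2 else 0 := by
      intro k
      rw [Matrix.conjTranspose_apply, hcol1 k]
      by_cases hk : k = i1 <;> simp [hk, hconj]
    rw [Finset.sum_congr rfl (fun k _ => h2 k), Finset.sum_ite_eq' Finset.univ i1]
    simp [hB i2]
  -- e3 : (A * Δ ^ 2) i1 i2
  have e3 : (A * Δ ^ 2) i1 i2 = A i1 i1 * d * Δ i1 i2 + (A i1 i1 * Δ i1 i2 + A i1 i2 * d) * d := by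
    have : A * Δ ^ 2 = (A * Δ) * Δ := by rw [pow_two, mul_assoc]
    rw [this, Matrix.mul_apply]
    have h3 : ∀ l : Fin n, (A * Δ) i1 l * Δ l i2 =
        if l = i1 then A i1 i1 * d * Δ i1 i2
        else if l = i2 then (A i1 i1 * Δ i1 i2 + A i1 i2 * d) * d else 0 := by
      intro l; rw [hcol2 l]
      by_cases h1 : l = i1 <;> by_cases h2 : l = i2 <;> simp [h1, h2, Ne.symm hne, hC1, hC2]
    rw [Finset.sum_congr rfl (fun l _ => h3 l), sum_two_aux i1 i2 hne]
  have key : ((2 : ℂ) • (Δᴴ * A * Δ) + Δᴴ ^ 2 * A + A * Δ ^ 2 +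
      (c : ℂ) • (Δᴴ * A + A * Δ)) i1 i2 = (c : ℂ) * A i1 i1 * Δ i1 i2 := by
    simp only [Matrix.add_apply, Matrix.smul_apply, smul_eq_mul, e1, e2, e3, hB i2, hC2]
    ring
  have hzero : (c : ℂ) * A i1 i1 * Δ i1 i2 = 0 := by
    rw [← key, heq]; simp
  have hcz : (c : ℂ) ≠ 0 := Complex.ofReal_ne_zero.mpr hc
  have : Δ i1 i2 = 0 := by
    rcases mul_eq_zero.mp hzero with h | h
    · exact absurd h (mul_ne_zero hcz hA)
    · exact h
  exact ⟨this, key⟩
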